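/- In the setting of the context, suppose additionally that for each k (large enough) the stationarity equation 0 = ∇f(Y^k) + β(X^{k+1} − Y^k) + β(X^{k+1} − X^k) + λ U^{k+1} diag(w^k ∘ ξ^{k+1}) (V^{k+1})ᵀ holds with an SVD X^{k+1} = U^{k+1} diag(σ(X^{k+1})) (V^{k+1})ᵀ and ξ_i^{k+1} ∈ [−1,1]; that there exist r ∈ ℕ and c > 0 with σ_i(X^{k+1}) ≥ c and σ_i(X^k) + ε_i^k ≥ c for all i ≤ r and σ_i(X^{k+1}) = 0 for all i > r (for all large k); that ε_i^k → 0 as k → ∞ for all i ≤ r; and that ‖X^{k+1} − X^k‖_F → 0. Define E^{k+1} = ∇f(X^{k+1}) + λ U^{k+1} diag(w̄^{k+1} ∘ ξ^{k+1}) (V^{k+1})ᵀ with w̄_i^{k+1} = p σ_i(X^{k+1})^{p−1} for i ≤ r and w̄_i^{k+1} = w_i^k for i > r. Then ‖E^{k+1}‖_F → 0 as k → ∞. -/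

import Mathlib

open Filter Topology Matrix

/-- The singular values of a real `m × n` matrix (`m ≤ n`), in nonincreasing order:
`sval X i` is the `(i+1)`-th largest singular value of `X`. -/
noncomputable def sval {m n : ℕ} (X : Matrix (Fin m) (Fin n) ℝ) : Fin m → ℝ :=
  fun i =>
    let ev : Fin m → ℝ := (Matrix.isHermitian_mul_conjTranspose_self X).eigenvalues
    Real.sqrt (ev (Tuple.sort ev i.rev))

/-- The `m × n` matrix with the vector `d` on its main diagonal and zeros elsewhere. -/
def rdiag {m n : ℕ} (d : Fin m → ℝ) : Matrix (Fin m) (Fin n) ℝ :=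
  Matrix.of fun i j => if (j : ℕ) = (i : ℕ) then d i else 0

/-- The Frobenius norm of a matrix. -/
noncomputable def frobNorm {m n : ℕ} (X : Matrix (Fin m) (Fin n) ℝ) : ℝ :=
  Real.sqrt (∑ i, ∑ j, (X i j) ^ 2)

/-- The Frobenius (trace) inner product of two matrices. -/
def finner {m n : ℕ} (A B : Matrix (Fin m) (Fin n) ℝ) : ℝ :=
  ∑ i, ∑ j, A i j * B i j

/-- `G` is the (Fréchet) gradient of `f : ℝ^{m×n} → ℝ` at `X`, with respect to the
Frobenius inner product. -/
def HasFrobGradientAt {m n : ℕ} (f : Matrix (Fin m) (Fin n) ℝ → ℝ)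
    (G X : Matrix (Fin m) (Fin n) ℝ) : Prop :=
  Filter.Tendsto
    (fun H : Matrix (Fin m) (Fin n) ℝ => |f (X + H) - f X - finner G H| / frobNorm H)
    (nhdsWithin 0 {0}ᶜ) (nhds 0)

open Finset
open scoped NNReal

section AuxStmt11
variable {N n : ℕ}

local notation "⟪" x ", " y "⟫" => @inner ℝ _ _ x y



lemma repr_eq_zero_of_mem_span (b : OrthonormalBasis (Fin N) ℝ (EuclideanSpace ℝ (Fin N)))
    (s : Set (Fin N)) {x : EuclideanSpace ℝ (Fin N)} (hx : x ∈ Submodule.span ℝ (b '' s))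
    {t : Fin N} (ht : t ∉ s) : b.repr x t = 0 := by
  rw [b.repr_apply_apply]
  induction hx using Submodule.span_induction with
  | mem y hy =>
      obtain ⟨u, hu, rfl⟩ := hy
      exact b.orthonormal.2 (fun h => ht (h ▸ hu))
  | zero => simp
  | add y z _ _ hy hz => rw [inner_add_right, hy, hz, add_zero]
  | smul a y _ hy => rw [inner_smul_right, hy, mul_zero]

lemma inner_toEuclideanLin_eq {H : Matrix (Fin N) (Fin N) ℝ} (hH : H.IsHermitian)
    (x : EuclideanSpace ℝ (Fin N)) :
    ⟪x, Matrix.toEuclideanLin H x⟫ =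
      ∑ t, hH.eigenvalues t * (hH.eigenvectorBasis.repr x t)^2 := by
  set b := hH.eigenvectorBasis with hb
  set T := Matrix.toEuclideanLin H with hT
  have hsym : (Matrix.toEuclideanLin H).IsSymmetric := (Matrix.isHermitian_iff_isSymmetric).1 hH
  have hrepr : ∀ t, b.repr (T x) t = hH.eigenvalues t * b.repr x t := by
    intro t
    have hTb : T (b t) = hH.eigenvalues t • b t := by
      have := hH.mulVec_eigenvectorBasis t
      apply (WithLp.equiv 2 (Fin N → ℝ)).injective
      exact this
    rw [b.repr_apply_apply, b.repr_apply_apply, ← hsym (b t) x, hTb,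
      inner_smul_left, RCLike.conj_to_real]
  have h1 : ⟪x, T x⟫ = ⟪b.repr x, b.repr (T x)⟫ := (b.repr.inner_map_map x (T x)).symm
  rw [h1, PiLp.inner_apply]
  refine Finset.sum_congr rfl fun t _ => ?_
  rw [hrepr t]
  simp [RCLike.inner_apply]
  ring


lemma sum_sq_repr (b : OrthonormalBasis (Fin N) ℝ (EuclideanSpace ℝ (Fin N)))
    (x : EuclideanSpace ℝ (Fin N)) : ∑ t, (b.repr x t)^2 = ‖x‖^2 := by
  have h1 : ‖b.repr x‖ = ‖x‖ := b.repr.norm_map x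
  have h2 : ‖b.repr x‖^2 = ∑ t, (b.repr x t)^2 := by
    rw [EuclideanSpace.norm_eq, Real.sq_sqrt (by positivity)]
    exact Finset.sum_congr rfl fun t _ => by rw [Real.norm_eq_abs, sq_abs]
  rw [← h2, h1]

-- dot product form
lemma inner_toEuclideanLin_mul_conjTranspose (A : Matrix (Fin N) (Fin n) ℝ)
    (x : EuclideanSpace ℝ (Fin N)) :
    ⟪x, Matrix.toEuclideanLin (A * Aᴴ) x⟫ = ∑ u, ((Aᴴ *ᵥ (WithLp.equiv 2 _ x)) u)^2 := by
  rw [PiLp.inner_apply]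
  have : ∀ t, (Matrix.toEuclideanLin (A * Aᴴ) x) t = ((A * Aᴴ) *ᵥ (WithLp.equiv 2 _ x)) t :=
    fun t => rfl
  simp_rw [RCLike.inner_apply, conj_trivial, this]
  have h2 : (WithLp.equiv 2 (Fin N → ℝ) x) ⬝ᵥ ((A * Aᴴ) *ᵥ (WithLp.equiv 2 _ x))
      = (Aᴴ *ᵥ (WithLp.equiv 2 _ x)) ⬝ᵥ (Aᴴ *ᵥ (WithLp.equiv 2 _ x)) := by
    rw [Matrix.conjTranspose_eq_transpose_of_trivial, ← Matrix.mulVec_mulVec,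
      Matrix.dotProduct_mulVec, ← Matrix.mulVec_transpose]
  simpa [dotProduct, sq, mul_comm] using h2


lemma finrank_span_onb (b : OrthonormalBasis (Fin N) ℝ (EuclideanSpace ℝ (Fin N)))
    (t : Finset (Fin N)) :
    Module.finrank ℝ (Submodule.span ℝ (b '' ↑t)) = t.card := by
  have li : LinearIndependent ℝ (fun u : {x // x ∈ t} => b u) :=
    b.orthonormal.linearIndependent.comp _ Subtype.val_injective
  have hr : Set.range (fun u : {x // x ∈ t} => b u) = b '' ↑t := by
    ext z; simp
  rw [← hr, finrank_span_eq_card li, Fintype.card_coe]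

lemma exists_unit_mem_inf (S T : Submodule ℝ (EuclideanSpace ℝ (Fin N)))
    (h : N < Module.finrank ℝ S + Module.finrank ℝ T) :
    ∃ x : EuclideanSpace ℝ (Fin N), x ∈ S ∧ x ∈ T ∧ ‖x‖ = 1 := by
  have hsup : Module.finrank ℝ ↥(S ⊔ T) ≤ N := by
    simpa using Submodule.finrank_le (S ⊔ T)
  have heq := Submodule.finrank_sup_add_finrank_inf_eq S T
  have hpos : 0 < Module.finrank ℝ ↥(S ⊓ T) := by omega
  have hne : S ⊓ T ≠ ⊥ := by
    intro hbot
    rw [hbot, finrank_bot] at hpos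
    exact lt_irrefl 0 hpos
  obtain ⟨x, hx, hx0⟩ := Submodule.exists_mem_ne_zero_of_ne_bot hne
  refine ⟨‖x‖⁻¹ • x, S.smul_mem _ hx.1, T.smul_mem _ hx.2, norm_smul_inv_norm hx0⟩

lemma rayleigh_ge {H : Matrix (Fin N) (Fin N) ℝ} (hH : H.IsHermitian) (t : Finset (Fin N))
    (θ : ℝ) (hθ : ∀ u ∈ t, θ ≤ hH.eigenvalues u) {x : EuclideanSpace ℝ (Fin N)}
    (hx : x ∈ Submodule.span ℝ (hH.eigenvectorBasis '' ↑t))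
    (hnx : ‖x‖ = 1) : θ ≤ ⟪x, Matrix.toEuclideanLin H x⟫ := by
  rw [inner_toEuclideanLin_eq hH]
  have h0 : θ = ∑ u, θ * (hH.eigenvectorBasis.repr x u)^2 := by
    rw [← Finset.mul_sum, sum_sq_repr, hnx]; ring
  rw [h0]
  refine Finset.sum_le_sum fun u _ => ?_
  by_cases hu : u ∈ t
  · exact mul_le_mul_of_nonneg_right (hθ u hu) (sq_nonneg _)
  · rw [repr_eq_zero_of_mem_span hH.eigenvectorBasis ↑t hx hu]
    simp

lemma rayleigh_le {H : Matrix (Fin N) (Fin N) ℝ} (hH : H.IsHermitian) (t : Finset (Fin N))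
    (θ : ℝ) (hθ : ∀ u ∈ t, hH.eigenvalues u ≤ θ) {x : EuclideanSpace ℝ (Fin N)}
    (hx : x ∈ Submodule.span ℝ (hH.eigenvectorBasis '' ↑t))
    (hnx : ‖x‖ = 1) : ⟪x, Matrix.toEuclideanLin H x⟫ ≤ θ := by
  rw [inner_toEuclideanLin_eq hH]
  have h0 : θ = ∑ u, θ * (hH.eigenvectorBasis.repr x u)^2 := by
    rw [← Finset.mul_sum, sum_sq_repr, hnx]; ring
  rw [h0]
  refine Finset.sum_le_sum fun u _ => ?_
  by_cases hu : u ∈ t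
  · exact mul_le_mul_of_nonneg_right (hθ u hu) (sq_nonneg _)
  · rw [repr_eq_zero_of_mem_span hH.eigenvectorBasis ↑t hx hu]
    simp

/-- ℓ² norm of a finite real vector. -/
noncomputable def l2norm {k : ℕ} (f : Fin k → ℝ) : ℝ := Real.sqrt (∑ u, (f u)^2)

lemma l2norm_eq {k : ℕ} (f : Fin k → ℝ) :
    l2norm f = ‖(WithLp.equiv 2 (Fin k → ℝ)).symm f‖ := by
  rw [EuclideanSpace.norm_eq, l2norm]
  congr 1
  exact Finset.sum_congr rfl fun u _ => by rw [Real.norm_eq_abs, sq_abs]; rfl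

lemma l2norm_nonneg {k : ℕ} (f : Fin k → ℝ) : 0 ≤ l2norm f := Real.sqrt_nonneg _

lemma l2norm_add_le {k : ℕ} (f g : Fin k → ℝ) : l2norm (f + g) ≤ l2norm f + l2norm g := by
  rw [l2norm_eq, l2norm_eq, l2norm_eq]
  rw [show (WithLp.equiv 2 (Fin k → ℝ)).symm (f + g)
      = (WithLp.equiv 2 (Fin k → ℝ)).symm f + (WithLp.equiv 2 (Fin k → ℝ)).symm g from rfl]
  exact norm_add_le _ _

lemma l2norm_conjTranspose_mulVec_le (M : Matrix (Fin N) (Fin n) ℝ) (v : Fin N → ℝ) :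
    l2norm (Mᴴ *ᵥ v) ≤ frobNorm M * l2norm v := by
  have hsq : ∑ u, ((Mᴴ *ᵥ v) u)^2 ≤ (∑ i, ∑ j, (M i j)^2) * (∑ t, (v t)^2) := by
    have h1 : ∀ u : Fin n, ((Mᴴ *ᵥ v) u)^2 ≤ (∑ t, (M t u)^2) * (∑ t, (v t)^2) := by
      intro u
      have : (Mᴴ *ᵥ v) u = ∑ t, M t u * v t := by
        simp [Matrix.mulVec, dotProduct, Matrix.conjTranspose_apply, mul_comm]
      rw [this]
      exact Finset.sum_mul_sq_le_sq_mul_sq _ _ _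
    calc ∑ u, ((Mᴴ *ᵥ v) u)^2 ≤ ∑ u, (∑ t, (M t u)^2) * (∑ t, (v t)^2) :=
          Finset.sum_le_sum fun u _ => h1 u
      _ = (∑ u, ∑ t, (M t u)^2) * (∑ t, (v t)^2) := by rw [Finset.sum_mul]
      _ = (∑ i, ∑ j, (M i j)^2) * (∑ t, (v t)^2) := by rw [Finset.sum_comm]
  calc l2norm (Mᴴ *ᵥ v) ≤ Real.sqrt ((∑ i, ∑ j, (M i j)^2) * (∑ t, (v t)^2)) :=
        Real.sqrt_le_sqrt hsq
    _ = frobNorm M * l2norm v := by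
        rw [Real.sqrt_mul (by positivity)]; rfl

lemma frobNorm_sub_comm (A B : Matrix (Fin N) (Fin n) ℝ) :
    frobNorm (A - B) = frobNorm (B - A) := by
  unfold frobNorm
  congr 1
  refine Finset.sum_congr rfl fun i _ => Finset.sum_congr rfl fun j _ => ?_
  have : (A - B) i j = -((B - A) i j) := by simp [Matrix.sub_apply]
  rw [this, neg_sq]

lemma sval_le_sval_add (A B : Matrix (Fin N) (Fin n) ℝ) (i : Fin N) :
    sval A i ≤ sval B i + frobNorm (A - B) := by
  classical
  set hA := Matrix.isHermitian_mul_conjTranspose_self A with hhA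
  set hB := Matrix.isHermitian_mul_conjTranspose_self B with hhB
  set σA := Tuple.sort hA.eigenvalues with hσA
  set σB := Tuple.sort hB.eigenvalues with hσB
  set j := i.rev with hj
  set tA : Finset (Fin N) := (Finset.Ici j).image σA with htA
  set tB : Finset (Fin N) := (Finset.Iic j).image σB with htB
  have hcardA : Module.finrank ℝ (Submodule.span ℝ (hA.eigenvectorBasis '' ↑tA)) = N - (j : ℕ) := by
    rw [finrank_span_onb, htA, Finset.card_image_of_injective _ σA.injective, Fin.card_Ici]
  have hcardB : Module.finrank ℝ (Submodule.span ℝ (hB.eigenvectorBasis '' ↑tB)) = (j : ℕ) + 1 := by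
    rw [finrank_span_onb, htB, Finset.card_image_of_injective _ σB.injective, Fin.card_Iic]
  obtain ⟨x, hxS, hxT, hxn⟩ := exists_unit_mem_inf
    (Submodule.span ℝ (hA.eigenvectorBasis '' ↑tA))
    (Submodule.span ℝ (hB.eigenvectorBasis '' ↑tB))
    (by rw [hcardA, hcardB]; have := j.isLt; omega)
  have h1 : hA.eigenvalues (σA j) ≤ ⟪x, Matrix.toEuclideanLin (A * Aᴴ) x⟫ := by
    refine rayleigh_ge hA tA _ (fun u hu => ?_) hxS hxn
    rw [htA] at hu
    obtain ⟨j', hj', rfl⟩ := Finset.mem_image.1 hu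
    exact Tuple.monotone_sort hA.eigenvalues (Finset.mem_Ici.1 hj')
  have h2 : ⟪x, Matrix.toEuclideanLin (B * Bᴴ) x⟫ ≤ hB.eigenvalues (σB j) := by
    refine rayleigh_le hB tB _ (fun u hu => ?_) hxT hxn
    rw [htB] at hu
    obtain ⟨j', hj', rfl⟩ := Finset.mem_image.1 hu
    exact Tuple.monotone_sort hB.eigenvalues (Finset.mem_Iic.1 hj')
  rw [inner_toEuclideanLin_mul_conjTranspose] at h1 h2
  set v : Fin N → ℝ := WithLp.equiv 2 (Fin N → ℝ) x with hv
  have hvl : l2norm v = 1 := by rw [l2norm_eq]; exact hxn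
  have hAv : sval A i ≤ l2norm (Aᴴ *ᵥ v) := by
    have : sval A i = Real.sqrt (hA.eigenvalues (σA j)) := rfl
    rw [this, l2norm]
    exact Real.sqrt_le_sqrt h1
  have hBv : l2norm (Bᴴ *ᵥ v) ≤ sval B i := by
    have : sval B i = Real.sqrt (hB.eigenvalues (σB j)) := rfl
    rw [this, l2norm]
    exact Real.sqrt_le_sqrt h2
  have hsplit : Aᴴ *ᵥ v = Bᴴ *ᵥ v + (A - B)ᴴ *ᵥ v := by
    rw [Matrix.conjTranspose_sub, Matrix.sub_mulVec]
    abel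
  calc sval A i ≤ l2norm (Aᴴ *ᵥ v) := hAv
    _ = l2norm (Bᴴ *ᵥ v + (A - B)ᴴ *ᵥ v) := by rw [← hsplit]
    _ ≤ l2norm (Bᴴ *ᵥ v) + l2norm ((A - B)ᴴ *ᵥ v) := l2norm_add_le _ _
    _ ≤ sval B i + frobNorm (A - B) * l2norm v :=
        add_le_add hBv (l2norm_conjTranspose_mulVec_le _ _)
    _ = sval B i + frobNorm (A - B) := by rw [hvl, mul_one]

lemma abs_sval_sub_le (A B : Matrix (Fin N) (Fin n) ℝ) (i : Fin N) :
    |sval A i - sval B i| ≤ frobNorm (A - B) := by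
  rw [abs_sub_le_iff]
  constructor
  · linarith [sval_le_sval_add A B i]
  · have := sval_le_sval_add B A i
    rw [frobNorm_sub_comm B A] at this
    linarith

section FrobAlgebra
variable {m' n' : ℕ}

lemma frobNorm_eq_norm (A : Matrix (Fin m') (Fin n') ℝ) :
    frobNorm A = ‖(WithLp.equiv 2 (Fin m' × Fin n' → ℝ)).symm (fun pr => A pr.1 pr.2)‖ := by
  rw [EuclideanSpace.norm_eq, frobNorm]
  congr 1
  rw [show (∑ i : Fin m', ∑ j : Fin n', (A i j)^2)
      = ∑ pr : Fin m' × Fin n', (A pr.1 pr.2)^2 from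
      (Fintype.sum_prod_type (f := fun pr => (A pr.1 pr.2)^2)).symm]
  exact Finset.sum_congr rfl fun pr _ => by rw [Real.norm_eq_abs, sq_abs]; rfl

lemma frobNorm_nonneg (A : Matrix (Fin m') (Fin n') ℝ) : 0 ≤ frobNorm A := Real.sqrt_nonneg _

lemma frobNorm_add_le (A B : Matrix (Fin m') (Fin n') ℝ) :
    frobNorm (A + B) ≤ frobNorm A + frobNorm B := by
  rw [frobNorm_eq_norm, frobNorm_eq_norm, frobNorm_eq_norm]
  exact norm_add_le ((WithLp.equiv 2 (Fin m' × Fin n' → ℝ)).symm (fun pr => A pr.1 pr.2))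
    ((WithLp.equiv 2 (Fin m' × Fin n' → ℝ)).symm (fun pr => B pr.1 pr.2))

lemma frobNorm_smul (a : ℝ) (A : Matrix (Fin m') (Fin n') ℝ) :
    frobNorm (a • A) = |a| * frobNorm A := by
  rw [frobNorm_eq_norm, frobNorm_eq_norm]
  have : (WithLp.equiv 2 (Fin m' × Fin n' → ℝ)).symm (fun pr => (a • A) pr.1 pr.2)
      = a • (WithLp.equiv 2 (Fin m' × Fin n' → ℝ)).symm (fun pr => A pr.1 pr.2) := rfl
  rw [this, norm_smul, Real.norm_eq_abs]

lemma frobNorm_sub_le (A B : Matrix (Fin m') (Fin n') ℝ) :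
    frobNorm (A - B) ≤ frobNorm A + frobNorm B := by
  have h1 : A - B = A + (-1 : ℝ) • B := by module
  rw [h1]
  refine (frobNorm_add_le _ _).trans ?_
  rw [frobNorm_smul]
  simp

lemma sumsq_eq_trace (A : Matrix (Fin m') (Fin n') ℝ) :
    ∑ i, ∑ j, (A i j)^2 = Matrix.trace (Aᵀ * A) := by
  rw [Matrix.trace]
  rw [Finset.sum_comm]
  refine Finset.sum_congr rfl fun j _ => ?_
  simp [Matrix.diag, Matrix.mul_apply, Matrix.transpose_apply, sq]

lemma frobNorm_unitary {U : Matrix (Fin m') (Fin m') ℝ} {V : Matrix (Fin n') (Fin n') ℝ}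
    (hU : Uᵀ * U = 1) (hV : Vᵀ * V = 1) (M : Matrix (Fin m') (Fin n') ℝ) :
    frobNorm (U * M * Vᵀ) = frobNorm M := by
  unfold frobNorm
  congr 1
  rw [sumsq_eq_trace, sumsq_eq_trace]
  have h1 : (U * M * Vᵀ)ᵀ * (U * M * Vᵀ) = V * (Mᵀ * M) * Vᵀ := by
    rw [Matrix.transpose_mul, Matrix.transpose_transpose]
    calc V * (U * M)ᵀ * (U * M * Vᵀ) = V * ((U * M)ᵀ * (U * M)) * Vᵀ := by
          simp only [Matrix.mul_assoc]
      _ = V * (Mᵀ * M) * Vᵀ := by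
          rw [Matrix.transpose_mul]
          have : Mᵀ * Uᵀ * (U * M) = Mᵀ * M := by
            rw [Matrix.mul_assoc, ← Matrix.mul_assoc Uᵀ U M, hU, Matrix.one_mul]
          simp only [Matrix.mul_assoc, this]
  rw [h1, Matrix.trace_mul_cycle, ← Matrix.mul_assoc, hV, Matrix.one_mul]

lemma frobNorm_rdiag_le (hmn : m' ≤ n') (d : Fin m' → ℝ) :
    frobNorm (rdiag d : Matrix (Fin m') (Fin n') ℝ) ≤ ∑ i, |d i| := by
  have hin : ∀ i : Fin m', ∑ j : Fin n', ((rdiag d : Matrix (Fin m') (Fin n') ℝ) i j)^2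
      = (d i)^2 := by
    intro i
    rw [Finset.sum_eq_single (⟨(i : ℕ), lt_of_lt_of_le i.isLt hmn⟩ : Fin n')]
    · simp [rdiag]
    · intro j _ hne
      have : ((j : ℕ) = (i : ℕ)) → False := by
        intro h
        exact hne (Fin.ext h)
      simp [rdiag, this]
      intro h
      exact absurd h this
    · intro h
      exact absurd (Finset.mem_univ _) h
  unfold frobNorm
  simp_rw [hin]
  have h2 : ∑ i, (d i)^2 ≤ (∑ i, |d i|)^2 := by
    have := Finset.sum_sq_le_sq_sum_of_nonneg (s := Finset.univ) (f := fun i => |d i|)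
      (fun i _ => abs_nonneg (d i))
    simpa [sq_abs] using this
  calc Real.sqrt (∑ i, (d i)^2) ≤ Real.sqrt ((∑ i, |d i|)^2) := Real.sqrt_le_sqrt h2
    _ = ∑ i, |d i| := Real.sqrt_sq (Finset.sum_nonneg fun i _ => abs_nonneg _)

end FrobAlgebra

section Rpow

lemma real_rpow_add_le {x y q : ℝ} (hx : 0 ≤ x) (hy : 0 ≤ y) (hq0 : 0 ≤ q) (hq1 : q ≤ 1) :
    (x + y) ^ q ≤ x ^ q + y ^ q := by
  have h := NNReal.rpow_add_le_add_rpow (x.toNNReal) (y.toNNReal) hq0 hq1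
  have hco : ((x.toNNReal + y.toNNReal : ℝ≥0) : ℝ) = x + y := by
    simp [Real.coe_toNNReal _ hx, Real.coe_toNNReal _ hy]
  calc (x + y) ^ q = (((x.toNNReal + y.toNNReal : ℝ≥0) : ℝ)) ^ q := by rw [hco]
    _ = (((x.toNNReal + y.toNNReal : ℝ≥0) ^ q : ℝ≥0) : ℝ) := by rw [NNReal.coe_rpow]
    _ ≤ ((x.toNNReal ^ q + y.toNNReal ^ q : ℝ≥0) : ℝ) := by exact_mod_cast h
    _ = x ^ q + y ^ q := by
        push_cast [NNReal.coe_rpow, Real.coe_toNNReal _ hx, Real.coe_toNNReal _ hy]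
        ring

lemma rpow_neg_diff_le_aux {q c a b : ℝ} (hq0 : 0 < q) (hq1 : q ≤ 1) (hc : 0 < c)
    (ha : c ≤ a) (hb : c ≤ b) (hba : b ≤ a) :
    |a ^ (-q) - b ^ (-q)| ≤ c ^ (-(2*q)) * |a - b| ^ q := by
  have ha0 : 0 < a := lt_of_lt_of_le hc ha
  have hb0 : 0 < b := lt_of_lt_of_le hc hb
  have hA : 0 < a ^ q := Real.rpow_pos_of_pos ha0 q
  have hB : 0 < b ^ q := Real.rpow_pos_of_pos hb0 q
  have hBA : b ^ q ≤ a ^ q := Real.rpow_le_rpow hb0.le hba hq0.le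
  have hcq : c ^ q ≤ b ^ q := Real.rpow_le_rpow hc.le hb hq0.le
  have hcq' : c ^ q ≤ a ^ q := Real.rpow_le_rpow hc.le ha hq0.le
  have hcqpos : 0 < c ^ q := Real.rpow_pos_of_pos hc q
  have hsub : a ^ q - b ^ q ≤ (a - b) ^ q := by
    have h := real_rpow_add_le (x := a - b) (y := b) (by linarith) hb0.le hq0.le hq1
    rw [sub_add_cancel] at h
    linarith
  have habs : |a ^ (-q) - b ^ (-q)| = (a ^ q - b ^ q) / (a ^ q * b ^ q) := by
    rw [Real.rpow_neg ha0.le, Real.rpow_neg hb0.le]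
    rw [abs_of_nonpos (by
      have := inv_anti₀ hB hBA
      linarith)]
    field_simp
    ring
  rw [habs]
  have hc2 : c ^ (-(2*q)) = (c ^ q * c ^ q)⁻¹ := by
    rw [Real.rpow_neg hc.le, ← Real.rpow_add hc]
    ring_nf
  rw [hc2]
  have hab : |a - b| = a - b := abs_of_nonneg (by linarith)
  rw [div_eq_mul_inv, mul_comm ((c ^ q * c ^ q)⁻¹), hab]
  refine mul_le_mul hsub ?_ (by positivity) (Real.rpow_nonneg (by linarith) q)
  exact inv_anti₀ (by positivity) (mul_le_mul hcq' hcq hcqpos.le hA.le)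

lemma rpow_neg_diff_le {q c a b : ℝ} (hq0 : 0 < q) (hq1 : q ≤ 1) (hc : 0 < c)
    (ha : c ≤ a) (hb : c ≤ b) :
    |a ^ (-q) - b ^ (-q)| ≤ c ^ (-(2*q)) * |a - b| ^ q := by
  rcases le_total b a with h | h
  · exact rpow_neg_diff_le_aux hq0 hq1 hc ha hb h
  · rw [abs_sub_comm, abs_sub_comm a b]
    exact rpow_neg_diff_le_aux hq0 hq1 hc hb ha h

end Rpow

end AuxStmt11

/-- Vanishing optimality error: under the stationarity equations of the
subproblems, rank stabilization with singular values bounded below by `c > 0`, vanishing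
perturbations `ε_i^k → 0` (for `i ≤ r`) and vanishing gaps `‖X^{k+1} − X^k‖_F → 0`,
the optimality error `E^{k+1} = ∇f(X^{k+1}) + λ U^{k+1} diag(w̄^{k+1} ∘ ξ^{k+1}) (V^{k+1})ᵀ`
satisfies `‖E^{k+1}‖_F → 0`. -/
theorem stmt_11 {m n : ℕ} (hmn : m ≤ n) (p lam β Lf alphabar : ℝ)
    (hp0 : 0 < p) (hp1 : p < 1) (hlam : 0 < lam) (hβ : 0 < β) (hab : 0 ≤ alphabar)
    (f : Matrix (Fin m) (Fin n) ℝ → ℝ)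
    (Gf : Matrix (Fin m) (Fin n) ℝ → Matrix (Fin m) (Fin n) ℝ)
    (hgrad : ∀ Z, HasFrobGradientAt f (Gf Z) Z)
    (hlip : ∀ Z W, frobNorm (Gf Z - Gf W) ≤ Lf * frobNorm (Z - W))
    (X Y : ℕ → Matrix (Fin m) (Fin n) ℝ) (ε : ℕ → Fin m → ℝ)
    (hε : ∀ k i, 0 < ε k i)
    (α : ℕ → ℝ) (hα : ∀ k, α k ∈ Set.Icc 0 alphabar)
    (hY : ∀ k, Y k = X k + α k • (X k - X (k - 1)))
    (w : ℕ → Fin m → ℝ)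
    (hw : ∀ k i, w k i = p * (sval (X k) i + ε k i) ^ (p - 1))
    (U : ℕ → Matrix (Fin m) (Fin m) ℝ) (V : ℕ → Matrix (Fin n) (Fin n) ℝ)
    (ξ : ℕ → Fin m → ℝ)
    (r : ℕ) (c : ℝ) (hc : 0 < c) (K : ℕ)
    (hbig : ∀ k, K ≤ k →
      (U (k + 1))ᵀ * U (k + 1) = 1 ∧
      (V (k + 1))ᵀ * V (k + 1) = 1 ∧
      X (k + 1) = U (k + 1) * rdiag (sval (X (k + 1))) * (V (k + 1))ᵀ ∧
      (∀ i : Fin m, |ξ (k + 1) i| ≤ 1) ∧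
      (0 : Matrix (Fin m) (Fin n) ℝ) =
        Gf (Y k) + β • (X (k + 1) - Y k) + β • (X (k + 1) - X k)
          + lam • (U (k + 1) * rdiag (fun i => w k i * ξ (k + 1) i) * (V (k + 1))ᵀ) ∧
      (∀ i : Fin m, (i : ℕ) < r → c ≤ sval (X (k + 1)) i ∧ c ≤ sval (X k) i + ε k i) ∧
      (∀ i : Fin m, r ≤ (i : ℕ) → sval (X (k + 1)) i = 0))
    (hεlim : ∀ i : Fin m, (i : ℕ) < r →
      Filter.Tendsto (fun k => ε k i) Filter.atTop (nhds 0))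
    (hXlim : Filter.Tendsto (fun k : ℕ => frobNorm (X (k + 1) - X k))
      Filter.atTop (nhds 0)) :
    Filter.Tendsto
      (fun k : ℕ => frobNorm (Gf (X (k + 1))
        + lam • (U (k + 1) * rdiag (fun i : Fin m =>
            (if (i : ℕ) < r then p * sval (X (k + 1)) i ^ (p - 1) else w k i)
              * ξ (k + 1) i) * (V (k + 1))ᵀ)))
      Filter.atTop (nhds 0) := by
  classical
  set q : ℝ := 1 - p with hq
  have hq0 : 0 < q := by simp [hq]; linarith
  have hq1 : q ≤ 1 := by simp [hq]; linarith
  set Lf' : ℝ := max Lf 0 with hLf'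
  have hLf'0 : 0 ≤ Lf' := le_max_right _ _
  set dX : ℕ → ℝ := fun k => frobNorm (X (k+1) - X k) with hdX
  set dXm : ℕ → ℝ := fun k => frobNorm (X k - X (k-1)) with hdXm
  have hdXm0 : Tendsto dXm atTop (nhds 0) := by
    have h1 : Tendsto (fun k => dX (k - 1)) atTop (nhds 0) :=
      hXlim.comp (tendsto_sub_atTop_nat 1)
    refine h1.congr' ?_
    filter_upwards [eventually_ge_atTop 1] with k hk
    simp only [hdX]
    rw [Nat.sub_add_cancel hk]
  set ζ : ℕ → Fin m → ℝ := fun k i =>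
    if (i : ℕ) < r then p * (c ^ (-(2*q)) * (dX k + ε k i) ^ q) else 0 with hζ
  set g : ℕ → ℝ := fun k =>
    Lf' * (dX k + alphabar * dXm k) + β * (dX k + alphabar * dXm k) + β * dX k
      + lam * ∑ i : Fin m, ζ k i with hg
  have hA : Tendsto (fun k => dX k + alphabar * dXm k) atTop (nhds 0) := by
    have := hXlim.add (hdXm0.const_mul alphabar)
    simpa using this
  have hζlim : ∀ i : Fin m, Tendsto (fun k => ζ k i) atTop (nhds 0) := by
    intro i
    by_cases hir : (i : ℕ) < r
    · simp only [hζ, if_pos hir]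
      have hb : Tendsto (fun k => dX k + ε k i) atTop (nhds 0) := by
        simpa using hXlim.add (hεlim i hir)
      have hrp : Tendsto (fun k => (dX k + ε k i) ^ q) atTop (nhds 0) := by
        have hcont := (Real.continuousAt_rpow_const 0 q (Or.inr hq0.le)).tendsto
        have := hcont.comp hb
        simpa [Function.comp_def, Real.zero_rpow hq0.ne'] using this
      have := (hrp.const_mul (c ^ (-(2*q)))).const_mul p
      simpa [mul_assoc] using this
    · simp only [hζ, if_neg hir]
      exact tendsto_const_nhds
  have hg0 : Tendsto g atTop (nhds 0) := by
    have hsum : Tendsto (fun k => ∑ i : Fin m, ζ k i) atTop (nhds 0) := by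
      have := tendsto_finset_sum (Finset.univ) (fun i (_ : i ∈ Finset.univ) => hζlim i)
      simpa using this
    have h := ((hA.const_mul Lf').add (hA.const_mul β)).add
      ((hXlim.const_mul β).add (hsum.const_mul lam))
    have heq : (fun k => (Lf' * (dX k + alphabar * dXm k) + β * (dX k + alphabar * dXm k))
        + (β * dX k + lam * ∑ i : Fin m, ζ k i)) = g := by
      funext k
      simp only [hg]
      ring
    rw [← heq]
    simpa using h
  refine squeeze_zero' (Eventually.of_forall fun k => frobNorm_nonneg _) ?_ hg0
  filter_upwards [eventually_ge_atTop K] with k hk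
  obtain ⟨hU, hV, hsvd, hξ, hstat, hlow, hzero⟩ := hbig k hk
  set Uk := U (k+1)
  set Vk := V (k+1)
  set wb : Fin m → ℝ := fun i =>
    (if (i : ℕ) < r then p * sval (X (k + 1)) i ^ (p - 1) else w k i) * ξ (k + 1) i with hwb
  set ww : Fin m → ℝ := fun i => w k i * ξ (k + 1) i with hww
  set δ : Fin m → ℝ := fun i => wb i - ww i with hδ
  have hrd : (rdiag wb : Matrix (Fin m) (Fin n) ℝ) = rdiag ww + rdiag δ := by
    ext i j
    simp only [rdiag, Matrix.add_apply, Matrix.of_apply, hδ]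
    split <;> ring
  have hexp : Uk * rdiag (n := n) wb * Vkᵀ = Uk * rdiag (n := n) ww * Vkᵀ + Uk * rdiag (n := n) δ * Vkᵀ := by
    rw [hrd, Matrix.mul_add, Matrix.add_mul]
  have hstat' : lam • (Uk * rdiag (n := n) ww * Vkᵀ)
      = -(Gf (Y k) + β • (X (k + 1) - Y k) + β • (X (k + 1) - X k)) :=
    eq_neg_of_add_eq_zero_right hstat.symm
  have hEk : Gf (X (k+1)) + lam • (Uk * rdiag (n := n) wb * Vkᵀ)
      = ((Gf (X (k+1)) - Gf (Y k)) + (-β) • (X (k + 1) - Y k)) + (-β) • (X (k + 1) - X k)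
        + lam • (Uk * rdiag (n := n) δ * Vkᵀ) := by
    rw [hexp, smul_add, hstat']
    module
  refine (congrArg frobNorm hEk).trans_le ?_
  -- now bound each of the four pieces
  have hXYb : frobNorm (X (k+1) - Y k) ≤ dX k + alphabar * dXm k := by
    have hYe : X (k+1) - Y k = (X (k+1) - X k) + (-(α k)) • (X k - X (k-1)) := by
      rw [hY k]; module
    rw [hYe]
    refine (frobNorm_add_le _ _).trans ?_
    rw [frobNorm_smul, abs_neg, abs_of_nonneg (hα k).1]
    exact add_le_add le_rfl
      (mul_le_mul_of_nonneg_right (hα k).2 (frobNorm_nonneg _))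
  have hT1 : frobNorm (Gf (X (k+1)) - Gf (Y k)) ≤ Lf' * (dX k + alphabar * dXm k) := by
    refine (hlip _ _).trans ?_
    have h1 : Lf * frobNorm (X (k+1) - Y k) ≤ Lf' * frobNorm (X (k+1) - Y k) :=
      mul_le_mul_of_nonneg_right (le_max_left _ _) (frobNorm_nonneg _)
    exact h1.trans (mul_le_mul_of_nonneg_left hXYb hLf'0)
  have hT2 : frobNorm ((-β) • (X (k + 1) - Y k)) ≤ β * (dX k + alphabar * dXm k) := by
    rw [frobNorm_smul, abs_neg, abs_of_pos hβ]
    exact mul_le_mul_of_nonneg_left hXYb hβ.le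
  have hT3 : frobNorm ((-β) • (X (k + 1) - X k)) = β * dX k := by
    rw [frobNorm_smul, abs_neg, abs_of_pos hβ]
  have hδb : ∀ i : Fin m, |δ i| ≤ ζ k i := by
    intro i
    by_cases hir : (i : ℕ) < r
    · have hwi := hw k i
      have ha := (hlow i hir).1
      have hb := (hlow i hir).2
      have hδi : δ i = (p * sval (X (k+1)) i ^ (p-1) - p * (sval (X k) i + ε k i) ^ (p-1))
          * ξ (k+1) i := by
        simp only [hδ, hwb, hww, if_pos hir, hwi]
        ring
      have hdiff : |sval (X (k+1)) i ^ (p-1) - (sval (X k) i + ε k i) ^ (p-1)|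
          ≤ c ^ (-(2*q)) * (dX k + ε k i) ^ q := by
        have hpq : (p - 1 : ℝ) = -q := by rw [hq]; ring
        rw [hpq]
        refine (rpow_neg_diff_le hq0 hq1 hc ha hb).trans ?_
        refine mul_le_mul_of_nonneg_left ?_ (Real.rpow_nonneg hc.le _)
        refine Real.rpow_le_rpow (abs_nonneg _) ?_ hq0.le
        have h1 : |sval (X (k+1)) i - (sval (X k) i + ε k i)|
            ≤ |sval (X (k+1)) i - sval (X k) i| + |ε k i| := by
          have : sval (X (k+1)) i - (sval (X k) i + ε k i)
              = (sval (X (k+1)) i - sval (X k) i) - ε k i := by ring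
          rw [this]
          exact abs_sub _ _
        refine h1.trans ?_
        have h2 := abs_sval_sub_le (X (k+1)) (X k) i
        rw [abs_of_pos (hε k i)]
        exact add_le_add h2 le_rfl
      calc |δ i| = |p * sval (X (k+1)) i ^ (p-1) - p * (sval (X k) i + ε k i) ^ (p-1)|
            * |ξ (k+1) i| := by rw [hδi, abs_mul]
        _ ≤ |p * sval (X (k+1)) i ^ (p-1) - p * (sval (X k) i + ε k i) ^ (p-1)| * 1 :=
            mul_le_mul_of_nonneg_left (hξ i) (abs_nonneg _)
        _ = p * |sval (X (k+1)) i ^ (p-1) - (sval (X k) i + ε k i) ^ (p-1)| := by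
            rw [mul_one, show p * sval (X (k+1)) i ^ (p-1) - p * (sval (X k) i + ε k i) ^ (p-1)
              = p * (sval (X (k+1)) i ^ (p-1) - (sval (X k) i + ε k i) ^ (p-1)) from by ring,
              abs_mul, abs_of_pos hp0]
        _ ≤ p * (c ^ (-(2*q)) * (dX k + ε k i) ^ q) :=
            mul_le_mul_of_nonneg_left hdiff hp0.le
        _ = ζ k i := by rw [hζ]; simp [if_pos hir]
    · have hδi : δ i = 0 := by simp [hδ, hwb, hww, if_neg hir]
      rw [hδi, hζ]
      simp [if_neg hir]
  have hT4 : frobNorm (lam • (Uk * rdiag (n := n) δ * Vkᵀ)) ≤ lam * ∑ i : Fin m, ζ k i := by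
    rw [frobNorm_smul, abs_of_pos hlam, frobNorm_unitary hU hV]
    refine mul_le_mul_of_nonneg_left ?_ hlam.le
    refine (frobNorm_rdiag_le hmn δ).trans ?_
    exact Finset.sum_le_sum fun i _ => hδb i
  calc frobNorm (((Gf (X (k+1)) - Gf (Y k)) + (-β) • (X (k + 1) - Y k))
        + (-β) • (X (k + 1) - X k) + lam • (Uk * rdiag (n := n) δ * Vkᵀ))
      ≤ frobNorm (((Gf (X (k+1)) - Gf (Y k)) + (-β) • (X (k + 1) - Y k))
          + (-β) • (X (k + 1) - X k)) + frobNorm (lam • (Uk * rdiag (n := n) δ * Vkᵀ)) :=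
        frobNorm_add_le _ _
    _ ≤ frobNorm ((Gf (X (k+1)) - Gf (Y k)) + (-β) • (X (k + 1) - Y k))
          + frobNorm ((-β) • (X (k + 1) - X k)) + frobNorm (lam • (Uk * rdiag (n := n) δ * Vkᵀ)) :=
        add_le_add_left (frobNorm_add_le _ _) _
    _ ≤ frobNorm (Gf (X (k+1)) - Gf (Y k)) + frobNorm ((-β) • (X (k + 1) - Y k))
          + frobNorm ((-β) • (X (k + 1) - X k)) + frobNorm (lam • (Uk * rdiag (n := n) δ * Vkᵀ)) :=
        add_le_add_left (add_le_add_left (frobNorm_add_le _ _) _) _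
    _ ≤ Lf' * (dX k + alphabar * dXm k) + β * (dX k + alphabar * dXm k) + β * dX k
          + lam * ∑ i : Fin m, ζ k i := by
        refine add_le_add (add_le_add (add_le_add hT1 hT2) (le_of_eq hT3)) hT4
    _ = g k := by rw [hg]
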